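/- Let A = (Q, δ, q_init, col) be a finite deterministic parity automaton over the alphabet {0,1} × {0,1} × {0,1} defining the relation R_A on triples of ω-sequences, let P ⊆ ℕ, and let G_{A,P} be the associated parity game. Then: (1) Player I has a winning strategy in G_{A,P} if and only if there is a strongly causal operator G : (ℕ → Bool) → (ℕ → Bool) such that (G Y, Y, χ_P) ∉ R_A for every Y; and (2) Player II has a winning strategy in G_{A,P} if and only if there is a causal operator F : (ℕ → Bool) → (ℕ → Bool) such that (X, F X, χ_P) ∈ R_A for every X. -/

import Mathlib

open Classical in
/-- The characteristic ω-sequence of a set of natural numbers. -/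
noncomputable def chi (P : Set ℕ) : ℕ → Bool := fun n => decide (n ∈ P)

/-- An operator `F` between ω-sequences is *causal* (a C-operator) if
`F x t` depends only on `x 0, …, x t`. -/
def Causal {α β : Type} (F : (ℕ → α) → (ℕ → β)) : Prop :=
  ∀ x y : ℕ → α, ∀ t : ℕ, (∀ s ≤ t, x s = y s) → ∀ s ≤ t, F x s = F y s

/-- An operator `F` between ω-sequences is *strongly causal* (an SC-operator)
if `F x t` depends only on `x 0, …, x (t−1)`. -/
def StronglyCausal {α β : Type} (F : (ℕ → α) → (ℕ → β)) : Prop :=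
  ∀ x y : ℕ → α, ∀ t : ℕ, (∀ s < t, x s = y s) → F x t = F y t

/-- Acceptance by a deterministic parity automaton `(Q, δ, q₀, col)`: the
minimal color of a state visited infinitely often along the run on the
ω-word `a` is even. -/
def ParityAccepts {Q σ : Type*} (δ : Q → σ → Q) (q₀ : Q) (col : Q → ℕ)
    (a : ℕ → σ) : Prop :=
  Even (sInf {k | ∃ q, {n | ((List.range (n + 1)).map a).foldl δ q₀ = q}.Infinite ∧
    col q = k})

/-- Vertices of the game `G_{A,P}`: Player I vertices `Q × ℕ` and
Player II vertices `Q × Bool × ℕ`. -/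
abbrev GVert (Q : Type) : Type := (Q × ℕ) ⊕ (Q × Bool × ℕ)

/-- The edge relation of the arena of `G_{A,P}`: from `(q, n)` to `(q, a, n)`
for each `a : Bool`, and from `(q, a, n)` to `(δ q (a, b, c), n+1)` for each
`b : Bool`, where `c` tells whether `n ∈ P`. -/
def GameE {Q : Type} (δ : Q → Bool × Bool × Bool → Q) (P : Set ℕ)
    (u v : GVert Q) : Prop :=
  match u, v with
  | Sum.inl (q, n), Sum.inr (q', _, n') => q' = q ∧ n' = n
  | Sum.inr (q, a, n), Sum.inl (q', n') =>
      n' = n + 1 ∧ ∃ b : Bool, q' = δ q (a, b, chi P n)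
  | _, _ => False

/-- The color of a vertex of `G_{A,P}` is `col` of its `Q`-component. -/
def GameCol {Q : Type} (col : Q → ℕ) : GVert Q → ℕ
  | Sum.inl (q, _) => col q
  | Sum.inr (q, _, _) => col q

/-- An infinite play on an arena: an infinite `E`-path starting at `v₀`. -/
def IsPlay {V : Type*} (E : V → V → Prop) (v₀ : V) (π : ℕ → V) : Prop :=
  π 0 = v₀ ∧ ∀ n, E (π n) (π (n + 1))

/-- A finite play: a finite `E`-path starting at `v₀`, as a list. -/
def FinPlay {V : Type*} (E : V → V → Prop) (v₀ : V) (l : List V) : Prop :=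
  l.head? = some v₀ ∧ l.Chain' E

/-- A strategy (for the player owning the vertices satisfying `mine`) is
legal if at every finite play ending in one of his vertices it chooses an
edge-successor. -/
def LegalStrat {V : Type*} (E : V → V → Prop) (v₀ : V) (mine : V → Prop)
    (s : List V → V) : Prop :=
  ∀ (l : List V) (u : V), FinPlay E v₀ (l ++ [u]) → mine u → E u (s (l ++ [u]))

/-- A play is consistent with a strategy `s` of the player owning the
vertices satisfying `mine` if at each of his vertices the next vertex is the
one chosen by `s` on the finite play so far. -/
def ConsistentWith {V : Type*} (mine : V → Prop) (s : List V → V)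
    (π : ℕ → V) : Prop :=
  ∀ n, mine (π n) → π (n + 1) = s ((List.range (n + 1)).map π)

/-- A play is winning for Player I iff the minimal color occurring infinitely
often along it is odd. -/
def PlayerIWins {V : Type*} (c : V → ℕ) (π : ℕ → V) : Prop :=
  Odd (sInf {k | {n | c (π n) = k}.Infinite})


set_option linter.unusedSectionVars false


section
variable {Q : Type} (δ : Q → Bool × Bool × Bool → Q) (qinit : Q) (col : Q → ℕ) (P : Set ℕ)

def toQ : GVert Q → Q
  | Sum.inl (q, _) => q
  | Sum.inr (q, _, _) => q

def toA : GVert Q → Bool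
  | Sum.inr (_, a, _) => a
  | Sum.inl _ => false

def qseq (π : ℕ → GVert Q) (n : ℕ) : Q := toQ (π (2 * n))
def aseq (π : ℕ → GVert Q) (n : ℕ) : Bool := toA (π (2 * n + 1))

open Classical in
noncomputable def pick (q : Q) (a : Bool) (n : ℕ) (q' : Q) : Bool :=
  if h : ∃ b, q' = δ q (a, b, chi P n) then h.choose else false

lemma pick_spec {q : Q} {a : Bool} {n : ℕ} {q' : Q}
    (h : ∃ b, q' = δ q (a, b, chi P n)) :
    q' = δ q (a, pick δ P q a n q', chi P n) := by
  rw [pick, dif_pos h]; exact h.choose_spec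

noncomputable def bseq (π : ℕ → GVert Q) (n : ℕ) : Bool :=
  pick δ P (qseq π n) (aseq π n) n (qseq π (n + 1))

lemma shape {π : ℕ → GVert Q} (hπ : IsPlay (GameE δ P) (Sum.inl (qinit, 0)) π) :
    ∀ n, π (2 * n) = Sum.inl (qseq π n, n) ∧
      π (2 * n + 1) = Sum.inr (qseq π n, aseq π n, n) := by
  have step : ∀ n q, π (2 * n) = Sum.inl (q, n) →
      π (2 * n + 1) = Sum.inr (q, aseq π n, n) := by
    intro n q h
    have he := hπ.2 (2 * n)
    rw [h] at he
    match hv : π (2 * n + 1) with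
    | Sum.inl _ => rw [hv] at he; exact absurd he (by simp [GameE])
    | Sum.inr (q', a, n') =>
      rw [hv] at he
      obtain ⟨rfl, rfl⟩ := he
      simp only [aseq, hv, toA]
  intro n
  induction n with
  | zero =>
    have h0 : π (2 * 0) = Sum.inl (qinit, 0) := by simpa using hπ.1
    have hq : qseq π 0 = qinit := by rw [qseq, h0]; rfl
    exact ⟨by rw [h0, hq], by rw [hq]; exact step 0 qinit h0⟩
  | succ n ih =>
    have he := hπ.2 (2 * n + 1)
    rw [ih.2] at he
    have h2 : (2 : ℕ) * (n + 1) = 2 * n + 1 + 1 := by ring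
    rcases hv : π (2 * n + 1 + 1) with ⟨q', n'⟩ | v
    · rw [hv] at he
      obtain ⟨hn', _⟩ := he
      subst hn'
      have hq : qseq π (n + 1) = q' := by rw [qseq, h2, hv]; rfl
      have hfst' : π (2 * (n + 1)) = Sum.inl (qseq π (n + 1), n + 1) := by
        rw [h2, hv, hq]
      exact ⟨by rw [hq], step (n + 1) _ hfst'⟩
    · rw [hv] at he; exact absurd he (by simp [GameE])

lemma qseq_zero {π : ℕ → GVert Q} (hπ : IsPlay (GameE δ P) (Sum.inl (qinit, 0)) π) :
    qseq π 0 = qinit := by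
  rw [qseq]; norm_num [hπ.1, toQ]

lemma qseq_succ_ex {π : ℕ → GVert Q} (hπ : IsPlay (GameE δ P) (Sum.inl (qinit, 0)) π) (n : ℕ) :
    ∃ b, qseq π (n + 1) = δ (qseq π n) (aseq π n, b, chi P n) := by
  have he := hπ.2 (2 * n + 1)
  rw [(shape δ qinit P hπ n).2] at he
  have h2 : (2 : ℕ) * (n + 1) = 2 * n + 1 + 1 := by ring
  rw [show (2 : ℕ) * n + 1 + 1 = 2 * (n+1) by ring, (shape δ qinit P hπ (n+1)).1] at he
  exact he.2

lemma qseq_succ {π : ℕ → GVert Q} (hπ : IsPlay (GameE δ P) (Sum.inl (qinit, 0)) π) (n : ℕ) :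
    qseq π (n + 1) = δ (qseq π n) (aseq π n, bseq δ P π n, chi P n) :=
  pick_spec δ P (qseq_succ_ex δ qinit P hπ n)

end
section
variable {Q : Type} (δ : Q → Bool × Bool × Bool → Q) (qinit : Q) (col : Q → ℕ) (P : Set ℕ)

lemma inf_of_inj {f : ℕ → ℕ} (hf : Function.Injective f) {S T : Set ℕ}
    (hS : S.Infinite) (h : ∀ n ∈ S, f n ∈ T) : T.Infinite :=
  Set.Infinite.mono (Set.image_subset_iff.mpr h) (hS.image hf.injOn)

lemma inf_shift {p : ℕ → Prop} (h : {n | p n}.Infinite) : {n | p (n + 1)}.Infinite := by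
  have h1 : ({n | p n} \ {0}).Infinite := h.diff (Set.finite_singleton 0)
  have hinj : Set.InjOn (fun n => n - 1) ({n | p n} \ {0}) := by
    intro a ha b hb hab
    simp only [Set.mem_diff, Set.mem_singleton_iff] at ha hb
    simp only at hab
    omega
  refine Set.Infinite.mono ?_ (h1.image hinj)
  rintro m ⟨x, hx, rfl⟩
  simp only [Set.mem_diff, Set.mem_singleton_iff, Set.mem_setOf_eq] at hx ⊢
  have hx1 : x - 1 + 1 = x := by omega
  rw [hx1]
  exact hx.1

lemma inf_div2 {p : ℕ → Prop} (h : {n | p (n / 2)}.Infinite) : {m | p m}.Infinite := by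
  by_contra hf
  rw [Set.not_infinite] at hf
  apply h
  have hsub : {n | p (n / 2)} ⊆ ⋃ m ∈ {m | p m}, {2 * m, 2 * m + 1} := by
    intro n hn
    simp only [Set.mem_iUnion, Set.mem_insert_iff, Set.mem_singleton_iff]
    exact ⟨n / 2, hn, by omega⟩
  exact ((hf.biUnion (fun m _ => (Set.finite_singleton _).insert _)).subset hsub)

lemma exists_fiber [Fintype Q] {g : ℕ → Q} {k : ℕ}
    (h : {n | col (g n) = k}.Infinite) :
    ∃ q, {n | g n = q}.Infinite ∧ col q = k := by
  haveI := h.to_subtype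
  obtain ⟨q, hq⟩ := Finite.exists_infinite_fiber (fun x : {n | col (g n) = k} => g x)
  have hinf : ((fun x : {n | col (g n) = k} => g ↑x) ⁻¹' {q}).Infinite :=
    Set.infinite_coe_iff.mp hq
  refine ⟨q, ?_, ?_⟩
  · have h2 := Set.Infinite.image (f := fun x : {n | col (g n) = k} => (x : ℕ))
      (Subtype.val_injective.injOn) hinf
    apply h2.mono
    rintro n ⟨x, hx, rfl⟩
    exact hx
  · obtain ⟨x, hx⟩ := hinf.nonempty
    simp only [Set.mem_preimage, Set.mem_singleton_iff] at hx
    rw [← hx]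
    exact x.2

end
section
variable {Q : Type} (δ : Q → Bool × Bool × Bool → Q) (qinit : Q) (col : Q → ℕ) (P : Set ℕ)

lemma run_eq {σ : Type*} (d : Q → σ → Q) (q : ℕ → Q) (w : ℕ → σ)
    (h0 : q 0 = qinit) (hw : ∀ n, q (n + 1) = d (q n) (w n)) :
    ∀ n, ((List.range (n + 1)).map w).foldl d qinit = q (n + 1) := by
  intro n
  induction n with
  | zero =>
    rw [show List.range 1 = [0] from rfl]
    simp [hw 0, h0]
  | succ n ih =>
    rw [List.range_succ, List.map_append, List.foldl_append, ih]
    simp [hw (n + 1)]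

lemma win_iff [Fintype Q] {π : ℕ → GVert Q}
    (hπ : IsPlay (GameE δ P) (Sum.inl (qinit, 0)) π)
    (w : ℕ → Bool × Bool × Bool)
    (hw : ∀ n, qseq π (n + 1) = δ (qseq π n) (w n)) :
    (PlayerIWins (GameCol col) π ↔ ¬ ParityAccepts δ qinit col w) := by
  have h0 : qseq π 0 = qinit := qseq_zero δ qinit P hπ
  have hrun := run_eq qinit δ (qseq π) w h0 hw
  have hc : ∀ n, GameCol col (π n) = col (qseq π (n / 2)) := by
    intro n
    rcases Nat.even_or_odd n with ⟨m, hm⟩ | ⟨m, hm⟩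
    · have : n = 2 * m := by omega
      subst this
      rw [(shape δ qinit P hπ m).1]
      simp [GameCol, Nat.mul_div_cancel_left m (by norm_num : 0 < 2)]
    · have : n = 2 * m + 1 := by omega
      subst this
      rw [(shape δ qinit P hπ m).2]
      have : (2 * m + 1) / 2 = m := by omega
      simp [GameCol, this]
  have hset : {k | {n | GameCol col (π n) = k}.Infinite}
      = {k | ∃ q, {n | ((List.range (n + 1)).map w).foldl δ qinit = q}.Infinite ∧
          col q = k} := by
    ext k
    simp only [Set.mem_setOf_eq]
    constructor
    · intro hk
      have hk2 : {n | col (qseq π (n / 2)) = k}.Infinite := by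
        apply Set.Infinite.mono _ hk
        intro n hn
        rw [Set.mem_setOf_eq, ← hc n]
        exact hn
      have hk3 : {m | col (qseq π m) = k}.Infinite := inf_div2 hk2
      obtain ⟨q, hq, hcol⟩ := exists_fiber col hk3
      refine ⟨q, ?_, hcol⟩
      apply Set.Infinite.mono _ (inf_shift hq)
      intro n hn
      rw [Set.mem_setOf_eq, hrun n]
      exact hn
    · rintro ⟨q, hq, rfl⟩
      have hq2 : {n | qseq π (n + 1) = q}.Infinite := by
        apply Set.Infinite.mono _ hq
        intro n hn
        rw [Set.mem_setOf_eq, ← hrun n]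
        exact hn
      have hq3 : {n | qseq π n = q}.Infinite :=
        inf_of_inj (f := fun n => n + 1) (fun a b h => by simp only at h; omega) hq2 (fun n hn => hn)
      apply inf_of_inj (f := fun n => 2 * n) (fun a b h => by simp only at h; omega) hq3
      intro n hn
      rw [Set.mem_setOf_eq, hc (2 * n)]
      have : 2 * n / 2 = n := by omega
      rw [this, hn]
  rw [PlayerIWins, ParityAccepts, hset]
  exact Nat.not_even_iff_odd.symm

end
section
variable {Q : Type} (δ : Q → Bool × Bool × Bool → Q) (qinit : Q) (col : Q → ℕ) (P : Set ℕ)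

def buildL (next : List (GVert Q) → GVert Q) : ℕ → List (GVert Q)
  | 0 => [Sum.inl (qinit, 0)]
  | n + 1 => buildL next n ++ [next (buildL next n)]

def buildP (next : List (GVert Q) → GVert Q) (n : ℕ) : GVert Q :=
  (buildL qinit next n).getLastD (Sum.inl (qinit, 0))

lemma buildP_zero (next : List (GVert Q) → GVert Q) :
    buildP qinit next 0 = Sum.inl (qinit, 0) := rfl

lemma buildP_succ (next : List (GVert Q) → GVert Q) (n : ℕ) :
    buildP qinit next (n + 1) = next (buildL qinit next n) := by
  rw [buildP, buildL, List.getLastD_concat]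

lemma buildL_eq (next : List (GVert Q) → GVert Q) (n : ℕ) :
    buildL qinit next n = (buildL qinit next n).dropLast ++ [buildP qinit next n] := by
  cases n with
  | zero => rfl
  | succ n => rw [buildP_succ, buildL, List.dropLast_concat]

lemma buildL_map (next : List (GVert Q) → GVert Q) (n : ℕ) :
    (List.range (n + 1)).map (buildP qinit next) = buildL qinit next n := by
  induction n with
  | zero => rfl
  | succ n ih =>
    rw [List.range_succ, List.map_append, ih, buildL]
    simp [buildP_succ]

lemma build_finplay {E : GVert Q → GVert Q → Prop} {next : List (GVert Q) → GVert Q}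
    (hnext : ∀ n, FinPlay E (Sum.inl (qinit, 0)) (buildL qinit next n) →
      E (buildP qinit next n) (next (buildL qinit next n))) :
    ∀ n, FinPlay E (Sum.inl (qinit, 0)) (buildL qinit next n) := by
  intro n
  induction n with
  | zero => exact ⟨rfl, List.isChain_singleton _⟩
  | succ n ih =>
    constructor
    · rw [buildL, List.head?_append]
      rw [ih.1]
      rfl
    · rw [buildL]; show List.IsChain _ _; rw [List.isChain_append]
      refine ⟨ih.2, List.isChain_singleton _, ?_⟩
      intro x hx y hy
      rw [show (buildL qinit next n).getLast? = some (buildP qinit next n) by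
        conv_lhs => rw [buildL_eq qinit next n]
        rw [List.getLast?_concat]] at hx
      simp only [Option.mem_def, Option.some.injEq, List.head?_cons] at hx hy
      subst hx; subst hy
      exact hnext n ih

lemma build_isplay {E : GVert Q → GVert Q → Prop} {next : List (GVert Q) → GVert Q}
    (hnext : ∀ n, FinPlay E (Sum.inl (qinit, 0)) (buildL qinit next n) →
      E (buildP qinit next n) (next (buildL qinit next n))) :
    IsPlay E (Sum.inl (qinit, 0)) (buildP qinit next) := by
  refine ⟨rfl, fun n => ?_⟩
  rw [buildP_succ]
  exact hnext n (build_finplay qinit hnext n)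

end
section
variable {Q : Type} [Fintype Q] (δ : Q → Bool × Bool × Bool → Q) (qinit : Q) (col : Q → ℕ) (P : Set ℕ)

noncomputable def nextI (s : List (GVert Q) → GVert Q) (Y : ℕ → Bool)
    (l : List (GVert Q)) : GVert Q :=
  Sum.elim (fun _ => s l)
    (fun p => Sum.inl (δ p.1 (p.2.1, Y p.2.2, chi P p.2.2), p.2.2 + 1))
    (l.getLastD (Sum.inl (qinit, 0)))

lemma nextI_hnext {s : List (GVert Q) → GVert Q}
    (hs : LegalStrat (GameE δ P) (Sum.inl (qinit, 0)) (fun u => u.isLeft = true) s)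
    (Y : ℕ → Bool) (n : ℕ)
    (hfin : FinPlay (GameE δ P) (Sum.inl (qinit, 0)) (buildL qinit (nextI δ qinit P s Y) n)) :
    GameE δ P (buildP qinit (nextI δ qinit P s Y) n)
      (nextI δ qinit P s Y (buildL qinit (nextI δ qinit P s Y) n)) := by
  have hlast : (buildL qinit (nextI δ qinit P s Y) n).getLastD (Sum.inl (qinit, 0))
      = buildP qinit (nextI δ qinit P s Y) n := rfl
  have hdrop := buildL_eq qinit (nextI δ qinit P s Y) n
  rcases hv : buildP qinit (nextI δ qinit P s Y) n with ⟨q, m⟩ | ⟨q, a, m⟩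
  · rw [hv] at hlast hdrop
    have hnv : nextI δ qinit P s Y (buildL qinit (nextI δ qinit P s Y) n)
        = s (buildL qinit (nextI δ qinit P s Y) n) := by
      rw [nextI, hlast, Sum.elim_inl]
    rw [hnv]
    have hfin' := hfin
    rw [hdrop] at hfin'
    have hleg := hs _ _ hfin' rfl
    rw [← hdrop] at hleg
    exact hleg
  · rw [hv] at hlast
    have hnv : nextI δ qinit P s Y (buildL qinit (nextI δ qinit P s Y) n)
        = Sum.inl (δ q (a, Y m, chi P m), m + 1) := by
      rw [nextI, hlast, Sum.elim_inr]
    rw [hnv]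
    exact ⟨rfl, Y m, rfl⟩

lemma exists_G {s : List (GVert Q) → GVert Q}
    (hs : LegalStrat (GameE δ P) (Sum.inl (qinit, 0)) (fun u => u.isLeft = true) s)
    (hwin : ∀ π : ℕ → GVert Q, IsPlay (GameE δ P) (Sum.inl (qinit, 0)) π →
      ConsistentWith (fun u => u.isLeft = true) s π →
      PlayerIWins (GameCol col) π) :
    ∃ G : (ℕ → Bool) → (ℕ → Bool), StronglyCausal G ∧
      ∀ Y : ℕ → Bool, ¬ ParityAccepts δ qinit col (fun n => (G Y n, Y n, chi P n)) := by
  have hplay : ∀ Y, IsPlay (GameE δ P) (Sum.inl (qinit, 0))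
      (buildP qinit (nextI δ qinit P s Y)) :=
    fun Y => build_isplay qinit (nextI_hnext δ qinit P hs Y)
  have hagree : ∀ Y Y' : ℕ → Bool, ∀ m, (∀ k, 2 * k + 1 < m → Y k = Y' k) →
      buildL qinit (nextI δ qinit P s Y) m = buildL qinit (nextI δ qinit P s Y') m := by
    intro Y Y' m
    induction m with
    | zero => intro _; rfl
    | succ m ih =>
      intro hk
      have hL : buildL qinit (nextI δ qinit P s Y) m = buildL qinit (nextI δ qinit P s Y') m :=
        ih (fun k hk' => hk k (by omega))
      rw [buildL, buildL, hL]
      congr 1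
      have hlast : (buildL qinit (nextI δ qinit P s Y') m).getLastD (Sum.inl (qinit, 0))
          = buildP qinit (nextI δ qinit P s Y) m := by
        rw [buildP, hL]
      rcases hv : buildP qinit (nextI δ qinit P s Y) m with ⟨q, j⟩ | ⟨q, a, j⟩
      · rw [hv] at hlast
        rw [nextI, nextI, hlast, Sum.elim_inl, Sum.elim_inl]
      · rw [hv] at hlast
        rw [nextI, nextI, hlast, Sum.elim_inr, Sum.elim_inr]
        have hm : m = 2 * j + 1 := by
          rcases Nat.even_or_odd m with ⟨i, hi⟩ | ⟨i, hi⟩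
          · exfalso
            have hsh := (shape δ qinit P (hplay Y) i).1
            rw [show 2 * i = m by omega, hv] at hsh
            exact absurd hsh (by simp)
          · have hsh := (shape δ qinit P (hplay Y) i).2
            rw [show 2 * i + 1 = m by omega, hv] at hsh
            have hj : j = i := by
              have := congrArg (fun v : GVert Q => match v with
                | Sum.inr (_, _, n) => n
                | Sum.inl (_, n) => n) hsh
              simpa using this
            omega
        rw [hk j (by omega)]
  have haseq : ∀ Y Y' : ℕ → Bool, ∀ t, (∀ k, k < t → Y k = Y' k) →
      aseq (buildP qinit (nextI δ qinit P s Y)) t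
        = aseq (buildP qinit (nextI δ qinit P s Y')) t := by
    intro Y Y' t h
    have hag := hagree Y Y' (2 * t + 1) (fun k hk => h k (by omega))
    simp only [aseq, buildP, hag]
  refine ⟨fun Y => aseq (buildP qinit (nextI δ qinit P s Y)),
    fun Y Y' t h => haseq Y Y' t (fun k hk => h k hk), ?_⟩
  intro Y
  have hcons : ConsistentWith (fun u => u.isLeft = true) s
      (buildP qinit (nextI δ qinit P s Y)) := by
    intro n hn
    have hnv : buildP qinit (nextI δ qinit P s Y) (n + 1)
        = nextI δ qinit P s Y (buildL qinit (nextI δ qinit P s Y) n) :=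
      buildP_succ qinit _ n
    rcases hv : buildP qinit (nextI δ qinit P s Y) n with ⟨q, m⟩ | ⟨q, a, m⟩
    · have hlast : (buildL qinit (nextI δ qinit P s Y) n).getLastD (Sum.inl (qinit, 0))
          = Sum.inl (q, m) := by rw [← hv]; rfl
      rw [hnv, nextI, hlast, Sum.elim_inl, buildL_map qinit _ n]
    · rw [hv] at hn; simp at hn
  have hwinY := hwin _ (hplay Y) hcons
  have hw : ∀ n, qseq (buildP qinit (nextI δ qinit P s Y)) (n + 1)
      = δ (qseq (buildP qinit (nextI δ qinit P s Y)) n)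
          (aseq (buildP qinit (nextI δ qinit P s Y)) n, Y n, chi P n) := by
    intro n
    have h2 := (shape δ qinit P (hplay Y) n).2
    have hnv : buildP qinit (nextI δ qinit P s Y) (2 * n + 1 + 1)
        = nextI δ qinit P s Y (buildL qinit (nextI δ qinit P s Y) (2 * n + 1)) :=
      buildP_succ qinit _ (2 * n + 1)
    have hlast : (buildL qinit (nextI δ qinit P s Y) (2 * n + 1)).getLastD (Sum.inl (qinit, 0))
        = Sum.inr (qseq (buildP qinit (nextI δ qinit P s Y)) n,
            aseq (buildP qinit (nextI δ qinit P s Y)) n, n) := by rw [← h2]; rfl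
    have hval : buildP qinit (nextI δ qinit P s Y) (2 * n + 1 + 1)
        = Sum.inl (δ (qseq (buildP qinit (nextI δ qinit P s Y)) n)
            (aseq (buildP qinit (nextI δ qinit P s Y)) n, Y n, chi P n), n + 1) := by
      rw [hnv, nextI, hlast, Sum.elim_inr]
    rw [qseq, show 2 * (n + 1) = 2 * n + 1 + 1 by ring, hval]
    rfl
  exact (win_iff δ qinit col P (hplay Y) _ hw).mp hwinY

end
section
set_option linter.unusedSectionVars false
variable {Q : Type} [Fintype Q] (δ : Q → Bool × Bool × Bool → Q) (qinit : Q) (col : Q → ℕ) (P : Set ℕ)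

noncomputable def bOf (u v : GVert Q) : Bool :=
  match u, v with
  | Sum.inr (q, a, n), Sum.inl (q', _) => pick δ P q a n q'
  | _, _ => false

noncomputable def extY (l : List (GVert Q)) (k : ℕ) : Bool :=
  match l[2 * k + 1]?, l[2 * k + 2]? with
  | some u, some v => bOf δ P u v
  | _, _ => false

noncomputable def sG (G : (ℕ → Bool) → (ℕ → Bool)) (l : List (GVert Q)) : GVert Q :=
  Sum.elim (fun p : Q × ℕ => Sum.inr (p.1, G (extY δ P l) p.2, p.2))
    (fun p : Q × Bool × ℕ => Sum.inl (δ p.1 (p.2.1, false, chi P p.2.2), p.2.2 + 1))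
    (l.getLastD (Sum.inl (qinit, 0)))

lemma sG_legal (G : (ℕ → Bool) → (ℕ → Bool)) :
    LegalStrat (GameE δ P) (Sum.inl (qinit, 0)) (fun u => u.isLeft = true)
      (sG δ qinit P G) := by
  intro l u _ hu
  rcases u with ⟨q, n⟩ | u
  · have hlast : (l ++ [Sum.inl (q, n)]).getLastD (Sum.inl (qinit, 0)) = Sum.inl (q, n) :=
      List.getLastD_concat
    rw [sG, hlast, Sum.elim_inl]
    exact ⟨rfl, rfl⟩
  · simp at hu

lemma sG_winning (G : (ℕ → Bool) → (ℕ → Bool)) (hG : StronglyCausal G)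
    (hGA : ∀ Y : ℕ → Bool, ¬ ParityAccepts δ qinit col (fun n => (G Y n, Y n, chi P n)))
    (π : ℕ → GVert Q) (hπ : IsPlay (GameE δ P) (Sum.inl (qinit, 0)) π)
    (hcons : ConsistentWith (fun u => u.isLeft = true) (sG δ qinit P G) π) :
    PlayerIWins (GameCol col) π := by
  set Y : ℕ → Bool := bseq δ P π with hY
  have key : ∀ n, aseq π n = G Y n := by
    intro n
    have hmine : (π (2 * n)).isLeft = true := by
      rw [(shape δ qinit P hπ n).1]; rfl
    have hc := hcons (2 * n) hmine
    have hlen : ∀ i, i < 2 * n + 1 →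
        ((List.range (2 * n + 1)).map π)[i]? = some (π i) := by
      intro i hi
      rw [List.getElem?_map, List.getElem?_range hi]
      rfl
    have hlast : ((List.range (2 * n + 1)).map π).getLastD (Sum.inl (qinit, 0))
        = π (2 * n) := by
      rw [List.range_succ, List.map_append, List.map_singleton, List.getLastD_concat]
    have hsG : sG δ qinit P G ((List.range (2 * n + 1)).map π)
        = Sum.inr (qseq π n, G (extY δ P ((List.range (2 * n + 1)).map π)) n, n) := by
      rw [sG, hlast, (shape δ qinit P hπ n).1, Sum.elim_inl]
    rw [hsG] at hc
    rw [(shape δ qinit P hπ n).2] at hc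
    have haeq : aseq π n = G (extY δ P ((List.range (2 * n + 1)).map π)) n := by
      have := congrArg (fun v : GVert Q => match v with
        | Sum.inr (_, b, _) => b
        | Sum.inl _ => false) hc
      simpa using this
    rw [haeq]
    apply hG
    intro k hk
    have h1 : ((List.range (2 * n + 1)).map π)[2 * k + 1]? = some (π (2 * k + 1)) :=
      hlen _ (by omega)
    have h2 : ((List.range (2 * n + 1)).map π)[2 * k + 2]? = some (π (2 * k + 2)) :=
      hlen _ (by omega)
    rw [extY, h1, h2]
    rw [(shape δ qinit P hπ k).2, show 2 * k + 2 = 2 * (k + 1) by ring,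
      (shape δ qinit P hπ (k + 1)).1]
    rfl
  have hw : ∀ n, qseq π (n + 1) = δ (qseq π n) (G Y n, Y n, chi P n) := by
    intro n
    rw [← key n]
    exact qseq_succ δ qinit P hπ n
  exact (win_iff δ qinit col P hπ _ hw).mpr (hGA Y)

end
section
set_option linter.unusedSectionVars false
variable {Q : Type} [Fintype Q] (δ : Q → Bool × Bool × Bool → Q) (qinit : Q) (col : Q → ℕ) (P : Set ℕ)

noncomputable def nextII (s : List (GVert Q) → GVert Q) (X : ℕ → Bool)
    (l : List (GVert Q)) : GVert Q :=
  Sum.elim (fun p : Q × ℕ => Sum.inr (p.1, X p.2, p.2))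
    (fun _ => s l)
    (l.getLastD (Sum.inl (qinit, 0)))

lemma nextII_hnext {s : List (GVert Q) → GVert Q}
    (hs : LegalStrat (GameE δ P) (Sum.inl (qinit, 0)) (fun u => u.isRight = true) s)
    (X : ℕ → Bool) (n : ℕ)
    (hfin : FinPlay (GameE δ P) (Sum.inl (qinit, 0)) (buildL qinit (nextII qinit s X) n)) :
    GameE δ P (buildP qinit (nextII qinit s X) n)
      (nextII qinit s X (buildL qinit (nextII qinit s X) n)) := by
  have hlast : (buildL qinit (nextII qinit s X) n).getLastD (Sum.inl (qinit, 0))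
      = buildP qinit (nextII qinit s X) n := rfl
  have hdrop := buildL_eq qinit (nextII qinit s X) n
  rcases hv : buildP qinit (nextII qinit s X) n with ⟨q, m⟩ | ⟨q, a, m⟩
  · rw [hv] at hlast
    have hnv : nextII qinit s X (buildL qinit (nextII qinit s X) n)
        = Sum.inr (q, X m, m) := by rw [nextII, hlast, Sum.elim_inl]
    rw [hnv]
    exact ⟨rfl, rfl⟩
  · rw [hv] at hlast hdrop
    have hnv : nextII qinit s X (buildL qinit (nextII qinit s X) n)
        = s (buildL qinit (nextII qinit s X) n) := by rw [nextII, hlast, Sum.elim_inr]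
    rw [hnv]
    have hfin' := hfin
    rw [hdrop] at hfin'
    have hleg := hs _ _ hfin' rfl
    rw [← hdrop] at hleg
    exact hleg

lemma exists_F {s : List (GVert Q) → GVert Q}
    (hs : LegalStrat (GameE δ P) (Sum.inl (qinit, 0)) (fun u => u.isRight = true) s)
    (hwin : ∀ π : ℕ → GVert Q, IsPlay (GameE δ P) (Sum.inl (qinit, 0)) π →
      ConsistentWith (fun u => u.isRight = true) s π →
      ¬ PlayerIWins (GameCol col) π) :
    ∃ F : (ℕ → Bool) → (ℕ → Bool), Causal F ∧
      ∀ X : ℕ → Bool, ParityAccepts δ qinit col (fun n => (X n, F X n, chi P n)) := by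
  have hplay : ∀ X, IsPlay (GameE δ P) (Sum.inl (qinit, 0))
      (buildP qinit (nextII qinit s X)) :=
    fun X => build_isplay qinit (nextII_hnext δ qinit P hs X)
  have hagree : ∀ X X' : ℕ → Bool, ∀ m, (∀ k, 2 * k < m → X k = X' k) →
      buildL qinit (nextII qinit s X) m = buildL qinit (nextII qinit s X') m := by
    intro X X' m
    induction m with
    | zero => intro _; rfl
    | succ m ih =>
      intro hk
      have hL : buildL qinit (nextII qinit s X) m = buildL qinit (nextII qinit s X') m :=
        ih (fun k hk' => hk k (by omega))
      rw [buildL, buildL, hL]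
      congr 1
      have hlast : (buildL qinit (nextII qinit s X') m).getLastD (Sum.inl (qinit, 0))
          = buildP qinit (nextII qinit s X) m := by rw [buildP, hL]
      rcases hv : buildP qinit (nextII qinit s X) m with ⟨q, j⟩ | ⟨q, a, j⟩
      · rw [hv] at hlast
        rw [nextII, nextII, hlast, Sum.elim_inl, Sum.elim_inl]
        have hm : m = 2 * j := by
          rcases Nat.even_or_odd m with ⟨i, hi⟩ | ⟨i, hi⟩
          · have hsh := (shape δ qinit P (hplay X) i).1
            rw [show 2 * i = m by omega, hv] at hsh
            have hj : j = i := by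
              have := congrArg (fun v : GVert Q => match v with
                | Sum.inr (_, _, n) => n
                | Sum.inl (_, n) => n) hsh
              simpa using this
            omega
          · exfalso
            have hsh := (shape δ qinit P (hplay X) i).2
            rw [show 2 * i + 1 = m by omega, hv] at hsh
            exact absurd hsh (by simp)
        rw [hk j (by omega)]
      · rw [hv] at hlast
        rw [nextII, nextII, hlast, Sum.elim_inr, Sum.elim_inr]
  -- aseq equals X
  have haseqX : ∀ X : ℕ → Bool, ∀ n, aseq (buildP qinit (nextII qinit s X)) n = X n := by
    intro X n
    have h1 := (shape δ qinit P (hplay X) n).1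
    have h2 := (shape δ qinit P (hplay X) n).2
    have hnv : buildP qinit (nextII qinit s X) (2 * n + 1)
        = nextII qinit s X (buildL qinit (nextII qinit s X) (2 * n)) :=
      buildP_succ qinit _ (2 * n)
    have hlast : (buildL qinit (nextII qinit s X) (2 * n)).getLastD (Sum.inl (qinit, 0))
        = Sum.inl (qseq (buildP qinit (nextII qinit s X)) n, n) := by rw [← h1]; rfl
    have hval : buildP qinit (nextII qinit s X) (2 * n + 1)
        = Sum.inr (qseq (buildP qinit (nextII qinit s X)) n, X n, n) := by
      rw [hnv, nextII, hlast, Sum.elim_inl]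
    rw [hval] at h2
    have := congrArg (fun v : GVert Q => match v with
      | Sum.inr (_, b, _) => b
      | Sum.inl _ => false) h2
    simpa using this.symm
  refine ⟨fun X => bseq δ P (buildP qinit (nextII qinit s X)), ?_, ?_⟩
  · -- Causal
    intro X X' t h u hu
    have hQ : ∀ m, (∀ k, 2 * k < m → X k = X' k) →
        buildP qinit (nextII qinit s X) m = buildP qinit (nextII qinit s X') m := by
      intro m hm
      simp only [buildP, hagree X X' m hm]
    have e1 : buildP qinit (nextII qinit s X) (2 * u)
        = buildP qinit (nextII qinit s X') (2 * u) :=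
      hQ _ (fun k hk => h k (by omega))
    have e2 : buildP qinit (nextII qinit s X) (2 * u + 1)
        = buildP qinit (nextII qinit s X') (2 * u + 1) :=
      hQ _ (fun k hk => h k (by omega))
    have e3 : buildP qinit (nextII qinit s X) (2 * (u + 1))
        = buildP qinit (nextII qinit s X') (2 * (u + 1)) :=
      hQ _ (fun k hk => h k (by omega))
    simp only [bseq, qseq, aseq, e1, e2, e3]
  · intro X
    have hcons : ConsistentWith (fun u => u.isRight = true) s
        (buildP qinit (nextII qinit s X)) := by
      intro n hn
      have hnv : buildP qinit (nextII qinit s X) (n + 1)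
          = nextII qinit s X (buildL qinit (nextII qinit s X) n) :=
        buildP_succ qinit _ n
      rcases hv : buildP qinit (nextII qinit s X) n with ⟨q, m⟩ | ⟨q, a, m⟩
      · rw [hv] at hn; simp at hn
      · have hlast : (buildL qinit (nextII qinit s X) n).getLastD (Sum.inl (qinit, 0))
            = Sum.inr (q, a, m) := by rw [← hv]; rfl
        rw [hnv, nextII, hlast, Sum.elim_inr, buildL_map qinit _ n]
    have hnwin := hwin _ (hplay X) hcons
    have hw : ∀ n, qseq (buildP qinit (nextII qinit s X)) (n + 1)
        = δ (qseq (buildP qinit (nextII qinit s X)) n)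
            (X n, bseq δ P (buildP qinit (nextII qinit s X)) n, chi P n) := by
      intro n
      rw [← haseqX X n]
      exact qseq_succ δ qinit P (hplay X) n
    by_contra hA
    exact hnwin ((win_iff δ qinit col P (hplay X) _ hw).mpr hA)

end
section
set_option linter.unusedSectionVars false
variable {Q : Type} [Fintype Q] (δ : Q → Bool × Bool × Bool → Q) (qinit : Q) (col : Q → ℕ) (P : Set ℕ)

def extX (l : List (GVert Q)) (k : ℕ) : Bool :=
  match l[2 * k + 1]? with
  | some (Sum.inr (_, a, _)) => a
  | _ => false

noncomputable def sF (F : (ℕ → Bool) → (ℕ → Bool)) (l : List (GVert Q)) : GVert Q :=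
  Sum.elim (fun p : Q × ℕ => Sum.inr (p.1, false, p.2))
    (fun p : Q × Bool × ℕ =>
      Sum.inl (δ p.1 (p.2.1, F (extX l) p.2.2, chi P p.2.2), p.2.2 + 1))
    (l.getLastD (Sum.inl (qinit, 0)))

lemma sF_legal (F : (ℕ → Bool) → (ℕ → Bool)) :
    LegalStrat (GameE δ P) (Sum.inl (qinit, 0)) (fun u => u.isRight = true)
      (sF δ qinit P F) := by
  intro l u _ hu
  rcases u with u | ⟨q, a, n⟩
  · simp at hu
  · have hlast : (l ++ [Sum.inr (q, a, n)]).getLastD (Sum.inl (qinit, 0))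
        = Sum.inr (q, a, n) := List.getLastD_concat
    rw [sF, hlast, Sum.elim_inr]
    exact ⟨rfl, F (extX (l ++ [Sum.inr (q, a, n)])) n, rfl⟩

lemma sF_winning (F : (ℕ → Bool) → (ℕ → Bool)) (hF : Causal F)
    (hFA : ∀ X : ℕ → Bool, ParityAccepts δ qinit col (fun n => (X n, F X n, chi P n)))
    (π : ℕ → GVert Q) (hπ : IsPlay (GameE δ P) (Sum.inl (qinit, 0)) π)
    (hcons : ConsistentWith (fun u => u.isRight = true) (sF δ qinit P F) π) :
    ¬ PlayerIWins (GameCol col) π := by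
  set X : ℕ → Bool := aseq π with hX
  have hw : ∀ n, qseq π (n + 1) = δ (qseq π n) (X n, F X n, chi P n) := by
    intro n
    have hmine : (π (2 * n + 1)).isRight = true := by
      rw [(shape δ qinit P hπ n).2]; rfl
    have hc := hcons (2 * n + 1) hmine
    have hlen : ∀ i, i < 2 * n + 1 + 1 →
        ((List.range (2 * n + 1 + 1)).map π)[i]? = some (π i) := by
      intro i hi
      rw [List.getElem?_map, List.getElem?_range hi]
      rfl
    have hlast : ((List.range (2 * n + 1 + 1)).map π).getLastD (Sum.inl (qinit, 0))
        = π (2 * n + 1) := by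
      rw [List.range_succ, List.map_append, List.map_singleton, List.getLastD_concat]
    have hsF : sF δ qinit P F ((List.range (2 * n + 1 + 1)).map π)
        = Sum.inl (δ (qseq π n)
            (aseq π n, F (extX ((List.range (2 * n + 1 + 1)).map π)) n, chi P n), n + 1) := by
      rw [sF, hlast, (shape δ qinit P hπ n).2, Sum.elim_inr]
    rw [hsF] at hc
    have hFeq : F (extX ((List.range (2 * n + 1 + 1)).map π)) n = F X n := by
      apply hF _ _ n _ n le_rfl
      intro k hk
      have h1 : ((List.range (2 * n + 1 + 1)).map π)[2 * k + 1]? = some (π (2 * k + 1)) :=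
        hlen _ (by omega)
      rw [extX, h1, (shape δ qinit P hπ k).2]
    have hq : qseq π (n + 1) = δ (qseq π n) (aseq π n,
        F (extX ((List.range (2 * n + 1 + 1)).map π)) n, chi P n) := by
      rw [qseq, show 2 * (n + 1) = 2 * n + 1 + 1 by ring, hc]
      rfl
    rw [hq, hFeq]
  intro hwin
  exact ((win_iff δ qinit col P hπ _ hw).mp hwin) (hFA X)

end

/-- Correctness of the reduction to the parity game `G_{A,P}`:
(1) Player I has a winning strategy in `G_{A,P}` iff some strongly causal
operator `G` satisfies `(G Y, Y, χ_P) ∉ R_A` for every `Y`; and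
(2) Player II has a winning strategy in `G_{A,P}` iff some causal operator
`F` satisfies `(X, F X, χ_P) ∈ R_A` for every `X`. -/
theorem game_iff_operators {Q : Type} [Fintype Q]
    (δ : Q → Bool × Bool × Bool → Q) (qinit : Q) (col : Q → ℕ) (P : Set ℕ) :
    ((∃ s : List (GVert Q) → GVert Q,
        LegalStrat (GameE δ P) (Sum.inl (qinit, 0)) (fun u => u.isLeft = true) s ∧
        ∀ π : ℕ → GVert Q, IsPlay (GameE δ P) (Sum.inl (qinit, 0)) π →
          ConsistentWith (fun u => u.isLeft = true) s π →
          PlayerIWins (GameCol col) π) ↔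
      (∃ G : (ℕ → Bool) → (ℕ → Bool), StronglyCausal G ∧
        ∀ Y : ℕ → Bool,
          ¬ ParityAccepts δ qinit col (fun n => (G Y n, Y n, chi P n)))) ∧
    ((∃ s : List (GVert Q) → GVert Q,
        LegalStrat (GameE δ P) (Sum.inl (qinit, 0)) (fun u => u.isRight = true) s ∧
        ∀ π : ℕ → GVert Q, IsPlay (GameE δ P) (Sum.inl (qinit, 0)) π →
          ConsistentWith (fun u => u.isRight = true) s π →
          ¬ PlayerIWins (GameCol col) π) ↔
      (∃ F : (ℕ → Bool) → (ℕ → Bool), Causal F ∧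
        ∀ X : ℕ → Bool,
          ParityAccepts δ qinit col (fun n => (X n, F X n, chi P n)))) := by
  constructor
  · constructor
    · rintro ⟨s, hs, hwin⟩
      exact exists_G δ qinit col P hs hwin
    · rintro ⟨G, hG, hGA⟩
      exact ⟨sG δ qinit P G, sG_legal δ qinit P G,
        fun π hπ hc => sG_winning δ qinit col P G hG hGA π hπ hc⟩
  · constructor
    · rintro ⟨s, hs, hwin⟩
      exact exists_F δ qinit col P hs hwin
    · rintro ⟨F, hF, hFA⟩
      exact ⟨sF δ qinit P F, sF_legal δ qinit P F,
        fun π hπ hc => sF_winning δ qinit col P F hF hFA π hπ hc⟩
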